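/- Fix t ∈ (0,1) and let μ(x) = e^{−1}·(x+t)·(1 + t/x)^{x/t} for x ∈ (0, 1−t). Then μ is strictly concave on (0, 1−t). -/

import Mathlib

open Real Set Filter

private lemma aux_two_log_lt {s : ℝ} (hs : 1 < s) : 2 * Real.log s < s - 1 / s := by
  have hD : ∀ y ∈ Set.Ici (1:ℝ), HasDerivAt (fun y : ℝ => y - 1 / y - 2 * Real.log y)
      (1 - (-(y^2)⁻¹) - 2 * y⁻¹) y := by
    intro y hy
    have hy0 : (0:ℝ) < y := lt_of_lt_of_le one_pos hy
    have ha : HasDerivAt (fun y : ℝ => 1 / y) (-(y^2)⁻¹) y := by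
      simpa [one_div] using hasDerivAt_inv hy0.ne'
    exact ((hasDerivAt_id y).sub ha).sub ((Real.hasDerivAt_log hy0.ne').const_mul 2)
  have key : StrictMonoOn (fun y : ℝ => y - 1 / y - 2 * Real.log y) (Set.Ici 1) := by
    apply strictMonoOn_of_deriv_pos (convex_Ici 1)
    · exact fun y hy => (hD y hy).continuousAt.continuousWithinAt
    · intro y hy
      rw [interior_Ici] at hy
      have hy1 : (1:ℝ) < y := hy
      have hy0 : (0:ℝ) < y := lt_trans one_pos hy1
      rw [(hD y (Set.mem_Ici.mpr (le_of_lt hy1))).deriv]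
      have h2 : 1 - (-(y^2)⁻¹) - 2 * y⁻¹ = ((y - 1)/y)^2 := by field_simp; ring
      rw [h2]
      exact pow_pos (div_pos (by linarith) hy0) 2
  have := key (self_mem_Ici) (le_of_lt hs : (1:ℝ) ≤ s) hs
  simp only [Real.log_one] at this
  linarith

private lemma aux_log_sq {a b : ℝ} (ha : 0 < a) (hab : a < b) :
    (Real.log b - Real.log a)^2 < (b - a)^2 / (a * b) := by
  have hb : 0 < b := ha.trans hab
  set s := Real.sqrt (b / a) with hs
  have hr : (1:ℝ) < b / a := (one_lt_div ha).mpr hab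
  have hsq : s^2 = b / a := Real.sq_sqrt (by positivity)
  have hsnn : 0 ≤ s := Real.sqrt_nonneg _
  have hs1 : 1 < s := by nlinarith
  have hs0 : s ≠ 0 := by linarith
  have hlog : Real.log b - Real.log a = 2 * Real.log s := by
    rw [hs, Real.log_sqrt (by positivity), ← Real.log_div hb.ne' ha.ne']
    ring
  have hkey : Real.log b - Real.log a < s - 1 / s := by
    rw [hlog]; exact aux_two_log_lt hs1
  have hpos : 0 < Real.log b - Real.log a := by
    have := Real.log_lt_log ha hab; linarith
  have hsa : s^2 * a = b := by
    rw [hsq, div_mul_cancel₀ b ha.ne']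
  have hval : (s - 1 / s)^2 = (b - a)^2 / (a * b) := by
    rw [← hsa]; field_simp
  calc (Real.log b - Real.log a)^2 < (s - 1/s)^2 := by
        apply pow_lt_pow_left₀ hkey (le_of_lt hpos)
        norm_num
    _ = (b - a)^2 / (a * b) := hval

/-- The identric mean of `x` and `x + t`:
`μ(x) = e⁻¹ (x+t) (1 + t/x)^(x/t)`. -/
noncomputable def identric (t x : ℝ) : ℝ :=
  (Real.exp 1)⁻¹ * (x + t) * (1 + t / x) ^ (x / t)

/-- Part (ii) of lemma "lollipop": for fixed `t ∈ (0,1)`, the function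
`μ(x) = e⁻¹ (x+t) (1 + t/x)^(x/t)` is strictly concave on `(0, 1 - t)`. -/
theorem identric_strictConcaveOn (t : ℝ) (ht : t ∈ Set.Ioo (0 : ℝ) 1) :
    StrictConcaveOn ℝ (Set.Ioo (0 : ℝ) (1 - t)) (identric t) := by
  obtain ⟨ht0, ht1⟩ := ht
  set g : ℝ → ℝ := fun x => -1 + Real.log (x + t) +
      x / t * (Real.log (x + t) - Real.log x) with hg_def
  set g1 : ℝ → ℝ := fun x => (Real.log (x + t) - Real.log x) / t with hg1_def
  set F : ℝ → ℝ := fun x => Real.exp (g x) with hF_def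
  set G : ℝ → ℝ := fun x => Real.exp (g x) * g1 x with hG_def
  -- identric agrees with F on (0, ∞)
  have heq : ∀ x ∈ Set.Ioi (0:ℝ), identric t x = F x := by
    intro x hx
    have hx0 : (0:ℝ) < x := hx
    have hxt : (0:ℝ) < x + t := by linarith
    have h1 : (1:ℝ) + t / x = (x + t) / x := by field_simp
    rw [hF_def]
    unfold identric
    rw [h1, Real.rpow_def_of_pos (by positivity), Real.log_div hxt.ne' hx0.ne',
        ← Real.exp_neg, ← Real.exp_log hxt, ← Real.exp_add, ← Real.exp_add]
    simp only [hg_def]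
    ring_nf
    rw [Real.log_exp]
  -- derivative facts
  have hlog1 : ∀ x ∈ Set.Ioi (0:ℝ),
      HasDerivAt (fun y : ℝ => Real.log (y + t)) ((x + t)⁻¹) x := by
    intro x hx
    have hx0 : (0:ℝ) < x := hx
    have := ((hasDerivAt_id x).add_const t).log (by positivity : x + t ≠ 0)
    simpa using this
  have hgd : ∀ x ∈ Set.Ioi (0:ℝ), HasDerivAt g (g1 x) x := by
    intro x hx
    have hx0 : (0:ℝ) < x := hx
    have hxt : (0:ℝ) < x + t := by linarith
    have hdiv : HasDerivAt (fun y : ℝ => y / t) (1 / t) x := by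
      simpa using (hasDerivAt_id x).div_const t
    have hsub : HasDerivAt (fun y : ℝ => Real.log (y + t) - Real.log y)
        ((x + t)⁻¹ - x⁻¹) x := (hlog1 x hx).sub (Real.hasDerivAt_log hx0.ne')
    have hprod := hdiv.mul hsub
    have := ((hasDerivAt_const x (-1:ℝ)).add (hlog1 x hx)).add hprod
    refine this.congr_deriv ?_
    simp only [hg1_def]
    field_simp
    ring
  have hg1d : ∀ x ∈ Set.Ioi (0:ℝ),
      HasDerivAt g1 (((x + t)⁻¹ - x⁻¹) / t) x := by
    intro x hx
    have hx0 : (0:ℝ) < x := hx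
    exact ((hlog1 x hx).sub (Real.hasDerivAt_log hx0.ne')).div_const t
  have hFd : ∀ x ∈ Set.Ioi (0:ℝ), HasDerivAt F (G x) x := by
    intro x hx
    exact (hgd x hx).exp
  have hGd : ∀ x ∈ Set.Ioi (0:ℝ),
      HasDerivAt G (Real.exp (g x) * (g1 x ^ 2 + ((x + t)⁻¹ - x⁻¹) / t)) x := by
    intro x hx
    have := (hFd x hx).mul (hg1d x hx)
    refine this.congr_deriv ?_
    simp only [hG_def, hF_def]
    ring
  have hderiv1 : Set.EqOn (deriv (identric t)) G (Set.Ioi 0) := by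
    intro x hx
    have h1 : identric t =ᶠ[nhds x] F :=
      Filter.eventuallyEq_of_mem (isOpen_Ioi.mem_nhds hx) heq
    rw [h1.deriv_eq, (hFd x hx).deriv]
  have hderiv2 : ∀ x ∈ Set.Ioi (0:ℝ), deriv (deriv (identric t)) x =
      Real.exp (g x) * (g1 x ^ 2 + ((x + t)⁻¹ - x⁻¹) / t) := by
    intro x hx
    have h1 : deriv (identric t) =ᶠ[nhds x] G :=
      Filter.eventuallyEq_of_mem (isOpen_Ioi.mem_nhds hx) hderiv1
    rw [h1.deriv_eq, (hGd x hx).deriv]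
  apply strictConcaveOn_of_deriv2_neg (convex_Ioo _ _)
  · refine ContinuousOn.congr (fun x hx => ?_) (fun x hx => heq x hx.1)
    exact (hFd x hx.1).continuousAt.continuousWithinAt
  · intro x hx
    rw [interior_Ioo] at hx
    have hx0 : (0:ℝ) < x := hx.1
    have hxt : (0:ℝ) < x + t := by linarith
    show deriv (deriv (identric t)) x < 0
    rw [hderiv2 x hx.1]
    apply mul_neg_of_pos_of_neg (Real.exp_pos _)
    have hkey := aux_log_sq hx0 (show x < x + t by linarith)
    have hba : (x + t - x) = t := by ring
    rw [hba] at hkey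
    have h2 : g1 x ^ 2 = (Real.log (x + t) - Real.log x) ^ 2 / t ^ 2 := by
      simp only [hg1_def]; rw [div_pow]
    have h3 : (Real.log (x + t) - Real.log x) ^ 2 / t ^ 2
        < (t ^ 2 / (x * (x + t))) / t ^ 2 :=
      (div_lt_div_iff_of_pos_right (by positivity)).mpr hkey
    have h4 : (t ^ 2 / (x * (x + t))) / t ^ 2 = 1 / (x * (x + t)) := by
      field_simp
    have h5 : ((x + t)⁻¹ - x⁻¹) / t = -(1 / (x * (x + t))) := by
      field_simp
      ring
    rw [h2, h5]
    linarith [h3, h4.le, h4.ge]
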